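/- arXiv:2208.10674 — 5 statements merged into one kernel-verified Lean document; each statement's English description precedes it below -/
import Mathlib

section
/- Let X be a finite set with |X| = S−1, where S ≥ 2, and let 1 ≤ d ≤ S−1 and N_C ≥ 1 be natural numbers. Then, in the rational numbers, the number of functions f from Fin N_C to the d-element subsets of X such that there exists j ∈ X with j ∈ f(i) for every i, divided by C(S−1, d)^{N_C}, is at most (S−1) · (d/(S−1))^{N_C}. That is, the probability of a privacy breach of a fixed agent under uniformly random independent neighbor sets is at most (S−1)(d/(S−1))^{N_C}. -/
open Finset

lemma card_subsets_containing {X : Type*} [Fintype X] [DecidableEq X] (d : ℕ) (hd : 1 ≤ d)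
    (j : X) :
    ((Finset.univ.powersetCard d).filter (fun A : Finset X => j ∈ A)).card
      = (Fintype.card X - 1).choose (d - 1) := by
  have he : (Finset.univ.erase j).card = Fintype.card X - 1 := by
    rw [Finset.card_erase_of_mem (Finset.mem_univ j), Finset.card_univ]
  rw [← he, ← Finset.card_powersetCard (d-1) (Finset.univ.erase j)]
  apply Finset.card_nbij' (fun A => A.erase j) (fun B => insert j B)
  · intro A hA
    simp only [Finset.mem_coe, mem_filter, mem_powersetCard] at hA
    simp only [Finset.mem_coe, mem_powersetCard]
    refine ⟨fun x hx => ?_, ?_⟩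
    · simp only [mem_erase] at hx ⊢
      exact ⟨hx.1, mem_univ _⟩
    · rw [Finset.card_erase_of_mem hA.2, hA.1.2]
  · intro B hB
    simp only [Finset.mem_coe, mem_powersetCard] at hB
    have hjB : j ∉ B := fun h => (mem_erase.1 (hB.1 h)).1 rfl
    simp only [Finset.mem_coe, mem_filter, mem_powersetCard]
    exact ⟨⟨subset_univ _, by rw [Finset.card_insert_of_notMem hjB, hB.2, Nat.sub_add_cancel hd]⟩,
      mem_insert_self _ _⟩
  · intro A hA
    simp only [Finset.mem_coe, mem_filter] at hA
    exact Finset.insert_erase hA.2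
  · intro B hB
    simp only [Finset.mem_coe, mem_powersetCard] at hB
    have hjB : j ∉ B := fun h => (mem_erase.1 (hB.1 h)).1 rfl
    exact Finset.erase_insert hjB

/-- Probability of a privacy breach of a fixed agent under uniformly random independent
neighbor sets: with `|X| = S - 1`, `1 ≤ d ≤ S - 1`, `N_C ≥ 1`, the number of functions
`f : Fin N_C → {d-element subsets of X}` such that some `j ∈ X` lies in `f i` for every
`i`, divided by `C(S-1, d)^{N_C}`, is at most `(S-1) * (d/(S-1))^{N_C}` in `ℚ`. -/
theorem breach_probability_le
    (S d NC : ℕ) (X : Type*) [Fintype X] [DecidableEq X]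
    (hX : Fintype.card X = S - 1) (hS : 2 ≤ S) (hd1 : 1 ≤ d) (hd2 : d ≤ S - 1)
    (hNC : 1 ≤ NC) :
    (Nat.card {f : Fin NC → Finset X //
        (∀ i, (f i).card = d) ∧ ∃ j : X, ∀ i, j ∈ f i} : ℚ)
        / (((S - 1).choose d : ℚ) ^ NC)
      ≤ ((S : ℚ) - 1) * ((d : ℚ) / ((S : ℚ) - 1)) ^ NC := by
  set n := S - 1 with hn
  have hn1 : 1 ≤ n := le_trans hd1 hd2
  have hcpos : 0 < n.choose d := Nat.choose_pos hd2
  -- counting bound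
  have hcount : Nat.card {f : Fin NC → Finset X //
      (∀ i, (f i).card = d) ∧ ∃ j : X, ∀ i, j ∈ f i}
      ≤ n * ((n - 1).choose (d - 1)) ^ NC := by
    rw [Nat.card_eq_fintype_card, Fintype.card_subtype]
    calc (Finset.univ.filter (fun f : Fin NC → Finset X =>
          (∀ i, (f i).card = d) ∧ ∃ j : X, ∀ i, j ∈ f i)).card
        ≤ (Finset.univ.biUnion (fun j : X =>
            Fintype.piFinset (fun _ : Fin NC =>
              (Finset.univ.powersetCard d).filter (fun A : Finset X => j ∈ A)))).card := by
          apply Finset.card_le_card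
          intro f hf
          simp only [mem_filter] at hf
          obtain ⟨-, hcard, j, hj⟩ := hf
          refine Finset.mem_biUnion.2 ⟨j, mem_univ _, Fintype.mem_piFinset.2 fun i => ?_⟩
          simp [Finset.mem_powersetCard, hcard i, hj i]
      _ ≤ ∑ j : X, (Fintype.piFinset (fun _ : Fin NC =>
            (Finset.univ.powersetCard d).filter (fun A : Finset X => j ∈ A))).card :=
          Finset.card_biUnion_le
      _ = ∑ j : X, ((n - 1).choose (d - 1)) ^ NC := by
          refine Finset.sum_congr rfl fun j _ => ?_
          rw [Fintype.card_piFinset]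
          simp [card_subsets_containing d hd1 j, hX]
      _ = n * ((n - 1).choose (d - 1)) ^ NC := by
          rw [Finset.sum_const, card_univ, hX, smul_eq_mul]
  -- key identity: n * choose (n-1) (d-1) = choose n d * d
  have hid : n * (n - 1).choose (d - 1) = n.choose d * d := by
    have := Nat.add_one_mul_choose_eq (n - 1) (d - 1)
    simp only [Nat.succ_eq_add_one, Nat.sub_add_cancel hn1, Nat.sub_add_cancel hd1] at this
    exact this
  have hnQ : ((S : ℚ) - 1) = (n : ℚ) := by
    have : (S : ℚ) = (n : ℚ) + 1 := by
      rw [hn]; push_cast [Nat.cast_sub (le_trans one_le_two hS)]; ring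
    rw [this]; ring
  rw [hnQ]
  have hnQ0 : (0:ℚ) < (n : ℚ) := by exact_mod_cast hn1
  have hcQ0 : (0:ℚ) < (n.choose d : ℚ) := by exact_mod_cast hcpos
  have hratio : ((n - 1).choose (d - 1) : ℚ) / (n.choose d : ℚ) = (d : ℚ) / (n : ℚ) := by
    rw [div_eq_div_iff hcQ0.ne' hnQ0.ne']
    have : ((n : ℚ)) * ((n - 1).choose (d - 1) : ℚ) = (n.choose d : ℚ) * (d : ℚ) := by
      exact_mod_cast hid
    linarith [this]
  calc (Nat.card {f : Fin NC → Finset X //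
        (∀ i, (f i).card = d) ∧ ∃ j : X, ∀ i, j ∈ f i} : ℚ) / ((n.choose d : ℚ) ^ NC)
      ≤ ((n * ((n - 1).choose (d - 1)) ^ NC : ℕ) : ℚ) / ((n.choose d : ℚ) ^ NC) := by
        gcongr
    _ = (n : ℚ) * ((d : ℚ) / (n : ℚ)) ^ NC := by
        push_cast
        rw [mul_div_assoc, ← div_pow, hratio]
end

section
/- Let S, d, N_L, N_C be natural numbers with 1 ≤ d, 1 ≤ N_L, 1 ≤ N_C, and N_L + d < S. Then, over the real numbers, (1 − ∏_{l=1}^{N_L} (1 − d/(S−l)))^{N_C} ≤ exp(−N_C · (1 − d/(S−N_L))^{N_L}). -/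
/-- Upper bound of Theorem 2 of the paper: for `1 ≤ d`, `1 ≤ N_L`, `1 ≤ N_C`,
`N_L + d < S`, the collusion breach probability satisfies
`(1 - ∏_{l=1}^{N_L} (1 - d/(S-l)))^{N_C} ≤ exp(-N_C (1 - d/(S-N_L))^{N_L})`. -/
theorem collusion_breach_upper_bound
    (S d NL NC : ℕ) (hd : 1 ≤ d) (hNL : 1 ≤ NL) (hNC : 1 ≤ NC) (hS : NL + d < S) :
    (1 - ∏ l ∈ Finset.Icc 1 NL, (1 - (d : ℝ) / ((S : ℝ) - (l : ℝ)))) ^ NC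
      ≤ Real.exp (-(NC : ℝ) * (1 - (d : ℝ) / ((S : ℝ) - (NL : ℝ))) ^ NL) := by
  have hScast : (NL : ℝ) + (d : ℝ) < (S : ℝ) := by exact_mod_cast hS
  have hdpos : (0 : ℝ) < d := by exact_mod_cast hd
  have hden : (0 : ℝ) < (S : ℝ) - (NL : ℝ) := by linarith
  have hdlt : (d : ℝ) < (S : ℝ) - (NL : ℝ) := by linarith
  set q : ℝ := 1 - (d : ℝ) / ((S : ℝ) - (NL : ℝ)) with hq
  have hq0 : 0 < q := by
    have h : (d : ℝ) / ((S : ℝ) - (NL : ℝ)) < 1 := (div_lt_one hden).2 hdlt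
    rw [hq]; linarith
  have hq1 : q < 1 := by
    have h : 0 < (d : ℝ) / ((S : ℝ) - (NL : ℝ)) := div_pos hdpos hden
    rw [hq]; linarith
  -- factor bounds
  have hfac : ∀ l ∈ Finset.Icc 1 NL,
      q ≤ 1 - (d : ℝ) / ((S : ℝ) - (l : ℝ)) ∧
      0 ≤ 1 - (d : ℝ) / ((S : ℝ) - (l : ℝ)) ∧
      1 - (d : ℝ) / ((S : ℝ) - (l : ℝ)) ≤ 1 := by
    intro l hl
    simp only [Finset.mem_Icc] at hl
    have hlNL : (l : ℝ) ≤ (NL : ℝ) := by exact_mod_cast hl.2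
    have hdenl : (0 : ℝ) < (S : ℝ) - (l : ℝ) := by linarith
    have hdiv : (d : ℝ) / ((S : ℝ) - (l : ℝ)) ≤ (d : ℝ) / ((S : ℝ) - (NL : ℝ)) :=
      div_le_div_of_nonneg_left hdpos.le hden (by linarith)
    have hdiv1 : (d : ℝ) / ((S : ℝ) - (l : ℝ)) ≤ 1 := by
      have : (d : ℝ) / ((S : ℝ) - (l : ℝ)) ≤ (d : ℝ) / ((S : ℝ) - (NL : ℝ)) := hdiv
      have h1 : (d : ℝ) / ((S : ℝ) - (NL : ℝ)) ≤ 1 := (div_le_one hden).2 hdlt.le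
      linarith
    have hdivpos : 0 ≤ (d : ℝ) / ((S : ℝ) - (l : ℝ)) := div_nonneg hdpos.le hdenl.le
    exact ⟨by rw [hq]; linarith, by linarith, by linarith⟩
  set p : ℝ := ∏ l ∈ Finset.Icc 1 NL, (1 - (d : ℝ) / ((S : ℝ) - (l : ℝ))) with hp
  have hcard : (Finset.Icc 1 NL).card = NL := by simp [Nat.card_Icc]
  have hqNLp : q ^ NL ≤ p := by
    have := Finset.prod_le_prod (f := fun _ : ℕ => q)
      (g := fun l : ℕ => 1 - (d : ℝ) / ((S : ℝ) - (l : ℝ)))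
      (s := Finset.Icc 1 NL)
      (fun i hi => hq0.le) (fun i hi => (hfac i hi).1)
    simpa [Finset.prod_const, hcard] using this
  have hp1 : p ≤ 1 := Finset.prod_le_one (fun i hi => (hfac i hi).2.1) (fun i hi => (hfac i hi).2.2)
  have hqNL1 : q ^ NL ≤ 1 := pow_le_one₀ hq0.le hq1.le
  have hbase : 0 ≤ 1 - p := by linarith
  have hbase2 : 1 - p ≤ Real.exp (-(q ^ NL)) := by
    have h1 : 1 - p ≤ 1 - q ^ NL := by linarith
    have h2 : 1 - q ^ NL ≤ Real.exp (-(q ^ NL)) := by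
      have := Real.add_one_le_exp (-(q ^ NL))
      linarith
    linarith
  calc (1 - p) ^ NC ≤ (Real.exp (-(q ^ NL))) ^ NC := pow_le_pow_left₀ hbase hbase2 NC
    _ = Real.exp (-(NC : ℝ) * q ^ NL) := by
        rw [← Real.exp_nat_mul]; ring_nf
end

section
/- Let S, d, N_L be natural numbers with 1 ≤ d, 1 ≤ N_L, and N_L + d < S, let η be a real number with 0 < η < 1, and let N_C be a natural number with N_C ≥ |ln η| · (1 − d/(S−N_L))^{−N_L}. Then (1 − ∏_{l=1}^{N_L} (1 − d/(S−l)))^{N_C} ≤ η. -/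
/-- The paper's rule for choosing `N_C` under collusion: for `1 ≤ d`, `1 ≤ N_L`,
`N_L + d < S`, `0 < η < 1`, and `N_C ≥ |ln η| (1 - d/(S-N_L))^{-N_L}`, the collusion
breach probability `(1 - ∏_{l=1}^{N_L}(1 - d/(S-l)))^{N_C}` is at most `η`. -/
theorem collusion_NC_rule
    (S d NL NC : ℕ) (hd : 1 ≤ d) (hNL : 1 ≤ NL) (hS : NL + d < S)
    (η : ℝ) (hη0 : 0 < η) (hη1 : η < 1)
    (hNC : (NC : ℝ) ≥ |Real.log η| * (1 - (d : ℝ) / ((S : ℝ) - (NL : ℝ))) ^ (-(NL : ℤ))) :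
    (1 - ∏ l ∈ Finset.Icc 1 NL, (1 - (d : ℝ) / ((S : ℝ) - (l : ℝ)))) ^ NC ≤ η := by
  set q : ℝ := 1 - (d : ℝ) / ((S : ℝ) - (NL : ℝ)) with hq
  set p : ℝ := ∏ l ∈ Finset.Icc 1 NL, (1 - (d : ℝ) / ((S : ℝ) - (l : ℝ))) with hp
  have hSNL : (NL : ℝ) + (d : ℝ) < (S : ℝ) := by exact_mod_cast hS
  have hd1 : (1 : ℝ) ≤ d := by exact_mod_cast hd
  have hSN : (0 : ℝ) < (S : ℝ) - (NL : ℝ) := by linarith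
  have hq0 : 0 < q := by
    have : (d : ℝ) / ((S : ℝ) - (NL : ℝ)) < 1 := by
      rw [div_lt_one hSN]; linarith
    simpa [hq] using by linarith
  have hfac : ∀ l ∈ Finset.Icc 1 NL, q ≤ 1 - (d : ℝ) / ((S : ℝ) - (l : ℝ)) ∧
      1 - (d : ℝ) / ((S : ℝ) - (l : ℝ)) ≤ 1 := by
    intro l hl
    simp only [Finset.mem_Icc] at hl
    have hlNL : (l : ℝ) ≤ (NL : ℝ) := by exact_mod_cast hl.2
    have hSl : (0 : ℝ) < (S : ℝ) - (l : ℝ) := by linarith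
    constructor
    · have : (d : ℝ) / ((S : ℝ) - (l : ℝ)) ≤ (d : ℝ) / ((S : ℝ) - (NL : ℝ)) := by
        apply div_le_div_of_nonneg_left (by linarith) hSN (by linarith)
      simp only [hq]; linarith
    · have : (0 : ℝ) ≤ (d : ℝ) / ((S : ℝ) - (l : ℝ)) := by positivity
      linarith
  have hqNLp : q ^ NL ≤ p := by
    have := Finset.prod_le_prod (s := Finset.Icc 1 NL)
      (f := fun _ => q) (g := fun l : ℕ => 1 - (d : ℝ) / ((S : ℝ) - (l : ℝ)))
      (fun l hl => le_of_lt hq0) (fun l hl => (hfac l hl).1)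
    simpa [hp, Finset.prod_const, Nat.card_Icc] using this
  have hp1 : p ≤ 1 := Finset.prod_le_one
    (fun l hl => le_trans hq0.le (hfac l hl).1) (fun l hl => (hfac l hl).2)
  have hp0 : 0 < p := by
    calc (0:ℝ) < q ^ NL := pow_pos hq0 NL
    _ ≤ p := hqNLp
  -- 1 - p ≤ exp (-p)
  have hexp : 1 - p ≤ Real.exp (-p) := by
    have := Real.add_one_le_exp (-p)
    linarith
  have h1p0 : (0:ℝ) ≤ 1 - p := by linarith
  have step1 : (1 - p) ^ NC ≤ Real.exp (-p) ^ NC := pow_le_pow_left₀ h1p0 hexp NC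
  rw [← Real.exp_nat_mul] at step1
  -- NC * q^NL ≥ -log η
  have hlogneg : Real.log η < 0 := Real.log_neg hη0 hη1
  have habs : |Real.log η| = -Real.log η := abs_of_neg hlogneg
  have hqNL0 : 0 < q ^ NL := pow_pos hq0 NL
  have hNC' : -Real.log η ≤ (NC : ℝ) * q ^ NL := by
    have hz : q ^ (-(NL : ℤ)) = (q ^ NL)⁻¹ := by
      rw [zpow_neg, zpow_natCast]
    rw [habs, hz] at hNC
    rw [ge_iff_le, ← div_eq_mul_inv, div_le_iff₀ hqNL0] at hNC
    nlinarith [hqNL0]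
  have step2 : Real.exp ((NC : ℝ) * (-p)) ≤ η := by
    have : (NC : ℝ) * (-p) ≤ Real.log η := by
      have h2 : (NC : ℝ) * q ^ NL ≤ (NC : ℝ) * p :=
        mul_le_mul_of_nonneg_left hqNLp (Nat.cast_nonneg NC)
      linarith
    calc Real.exp ((NC : ℝ) * (-p)) ≤ Real.exp (Real.log η) := Real.exp_le_exp.mpr this
    _ = η := Real.exp_log hη0
  linarith [step1, step2]
end

section
/- Let E, d, N_E, N_C be natural numbers with 1 ≤ d, 1 ≤ N_C, and N_E ≤ E − d + 1. Then, over the real numbers, (1 − ∏_{l=0}^{d−1} (1 − N_E/(E−l)))^{N_C} ≤ exp(−N_C · (1 − N_E/(E−d+1))^{d}). -/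
/-- Upper bound of Theorem 3 of the paper: for `1 ≤ d`, `1 ≤ N_C`, `N_E ≤ E - d + 1`,
the eavesdropping breach probability satisfies
`(1 - ∏_{l=0}^{d-1} (1 - N_E/(E-l)))^{N_C} ≤ exp(-N_C (1 - N_E/(E-d+1))^{d})`. -/
theorem eavesdrop_breach_upper_bound
    (E d NE NC : ℕ) (hd : 1 ≤ d) (hNC : 1 ≤ NC)
    (hNE : (NE : ℝ) ≤ (E : ℝ) - (d : ℝ) + 1) :
    (1 - ∏ l ∈ Finset.range d, (1 - (NE : ℝ) / ((E : ℝ) - (l : ℝ)))) ^ NC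
      ≤ Real.exp (-(NC : ℝ) * (1 - (NE : ℝ) / ((E : ℝ) - (d : ℝ) + 1)) ^ d) := by
  rcases Nat.eq_zero_or_pos NE with h0 | hpos
  · subst h0
    simp only [Nat.cast_zero, zero_div, sub_zero, Finset.prod_const_one, sub_self]
    rw [zero_pow (by omega)]
    positivity
  · have hNE1 : (1 : ℝ) ≤ (NE : ℝ) := by exact_mod_cast hpos
    have hden : (0 : ℝ) < (E : ℝ) - (d : ℝ) + 1 := lt_of_lt_of_le (by linarith) hNE
    set q : ℝ := 1 - (NE : ℝ) / ((E : ℝ) - (d : ℝ) + 1) with hq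
    have hq0 : 0 ≤ q := by
      have : (NE : ℝ) / ((E : ℝ) - (d : ℝ) + 1) ≤ 1 := (div_le_one hden).mpr hNE
      rw [hq]; linarith
    have hfac : ∀ l ∈ Finset.range d, q ≤ 1 - (NE : ℝ) / ((E : ℝ) - (l : ℝ)) := by
      intro l hl
      have hl' : (l : ℝ) ≤ (d : ℝ) - 1 := by
        have := Finset.mem_range.mp hl
        have : (l : ℝ) + 1 ≤ (d : ℝ) := by exact_mod_cast this
        linarith
      have hdenl : (0 : ℝ) < (E : ℝ) - (l : ℝ) := lt_of_lt_of_le hden (by linarith)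
      have : (NE : ℝ) / ((E : ℝ) - (l : ℝ)) ≤ (NE : ℝ) / ((E : ℝ) - (d : ℝ) + 1) :=
        div_le_div_of_nonneg_left (by linarith) hden (by linarith)
      simp only [hq]; linarith
    have hfac1 : ∀ l ∈ Finset.range d, 1 - (NE : ℝ) / ((E : ℝ) - (l : ℝ)) ≤ 1 := by
      intro l hl
      have hl' : (l : ℝ) ≤ (d : ℝ) - 1 := by
        have := Finset.mem_range.mp hl
        have : (l : ℝ) + 1 ≤ (d : ℝ) := by exact_mod_cast this
        linarith
      have hdenl : (0 : ℝ) < (E : ℝ) - (l : ℝ) := lt_of_lt_of_le hden (by linarith)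
      have : 0 ≤ (NE : ℝ) / ((E : ℝ) - (l : ℝ)) := by positivity
      linarith
    have hprod_ge : q ^ d ≤ ∏ l ∈ Finset.range d, (1 - (NE : ℝ) / ((E : ℝ) - (l : ℝ))) := by
      calc q ^ d = ∏ _l ∈ Finset.range d, q := by rw [Finset.prod_const, Finset.card_range]
        _ ≤ _ := Finset.prod_le_prod (fun l _ => hq0) hfac
    have hprod_le : ∏ l ∈ Finset.range d, (1 - (NE : ℝ) / ((E : ℝ) - (l : ℝ))) ≤ 1 :=
      Finset.prod_le_one (fun l hl => le_trans hq0 (hfac l hl)) hfac1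
    have hbase : 1 - ∏ l ∈ Finset.range d, (1 - (NE : ℝ) / ((E : ℝ) - (l : ℝ)))
        ≤ Real.exp (-(q ^ d)) := by
      have := Real.add_one_le_exp (-(q ^ d))
      linarith
    have hbase0 : 0 ≤ 1 - ∏ l ∈ Finset.range d, (1 - (NE : ℝ) / ((E : ℝ) - (l : ℝ))) := by
      linarith
    calc (1 - ∏ l ∈ Finset.range d, (1 - (NE : ℝ) / ((E : ℝ) - (l : ℝ)))) ^ NC
        ≤ (Real.exp (-(q ^ d))) ^ NC := pow_le_pow_left₀ hbase0 hbase NC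
      _ = Real.exp (-(NC : ℝ) * q ^ d) := by
          rw [← Real.exp_nat_mul]; ring_nf
end

section
/- Let E, d, N_E be natural numbers with 1 ≤ d and N_E < E − d + 1, let η be a real number with 0 < η < 1, and let N_C be a natural number with N_C ≥ |ln η| · (1 − N_E/(E−d+1))^{−d}. Then (1 − ∏_{l=0}^{d−1} (1 − N_E/(E−l)))^{N_C} ≤ η. -/
/-- The paper's rule for choosing `N_C` under eavesdropping: for `1 ≤ d`,
`N_E < E - d + 1`, `0 < η < 1`, and `N_C ≥ |ln η| (1 - N_E/(E-d+1))^{-d}`, the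
eavesdropping breach probability `(1 - ∏_{l=0}^{d-1}(1 - N_E/(E-l)))^{N_C}` is at
most `η`. -/
theorem eavesdrop_NC_rule
    (E d NE NC : ℕ) (hd : 1 ≤ d)
    (hNE : (NE : ℝ) < (E : ℝ) - (d : ℝ) + 1)
    (η : ℝ) (hη0 : 0 < η) (hη1 : η < 1)
    (hNC : (NC : ℝ) ≥ |Real.log η| * (1 - (NE : ℝ) / ((E : ℝ) - (d : ℝ) + 1)) ^ (-(d : ℤ))) :
    (1 - ∏ l ∈ Finset.range d, (1 - (NE : ℝ) / ((E : ℝ) - (l : ℝ)))) ^ NC ≤ η := by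
  have hNE0 : (0:ℝ) ≤ NE := Nat.cast_nonneg _
  have hs : (0:ℝ) < (E:ℝ) - (d:ℝ) + 1 := lt_of_le_of_lt hNE0 hNE
  set q : ℝ := 1 - (NE:ℝ) / ((E:ℝ) - (d:ℝ) + 1) with hq_def
  have hq0 : 0 < q := by
    have : (NE:ℝ) / ((E:ℝ) - (d:ℝ) + 1) < 1 := (div_lt_one hs).mpr hNE
    simp only [hq_def]; linarith
  have hq1 : q ≤ 1 := by
    have : 0 ≤ (NE:ℝ) / ((E:ℝ) - (d:ℝ) + 1) := div_nonneg hNE0 hs.le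
    simp only [hq_def]; linarith
  have hfac : ∀ l ∈ Finset.range d,
      q ≤ 1 - (NE:ℝ)/((E:ℝ) - (l:ℝ)) ∧ 1 - (NE:ℝ)/((E:ℝ) - (l:ℝ)) ≤ 1 := by
    intro l hl
    have hl' : (l:ℝ) + 1 ≤ (d:ℝ) := by exact_mod_cast Finset.mem_range.mp hl
    have hEl : (E:ℝ) - (d:ℝ) + 1 ≤ (E:ℝ) - (l:ℝ) := by linarith
    have hEl0 : 0 < (E:ℝ) - (l:ℝ) := lt_of_lt_of_le hs hEl
    constructor
    · have h : (NE:ℝ)/((E:ℝ) - (l:ℝ)) ≤ (NE:ℝ)/((E:ℝ) - (d:ℝ) + 1) := by gcongr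
      simp only [hq_def]; linarith
    · have : 0 ≤ (NE:ℝ)/((E:ℝ) - (l:ℝ)) := div_nonneg hNE0 hEl0.le
      linarith
  set P : ℝ := ∏ l ∈ Finset.range d, (1 - (NE:ℝ)/((E:ℝ) - (l:ℝ))) with hP_def
  have hP_lb : q ^ d ≤ P := by
    have := Finset.prod_le_prod (s := Finset.range d)
      (f := fun _ => q) (g := fun l : ℕ => 1 - (NE:ℝ)/((E:ℝ) - (l:ℝ)))
      (fun l _ => hq0.le) (fun l hl => (hfac l hl).1)
    simpa using this
  have hP_ub : P ≤ 1 :=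
    Finset.prod_le_one (fun l hl => le_trans hq0.le (hfac l hl).1)
      (fun l hl => (hfac l hl).2)
  have hqd : 0 < q ^ d := pow_pos hq0 d
  have hqd1 : q ^ d ≤ 1 := pow_le_one₀ hq0.le hq1
  have hlogneg : Real.log η < 0 := Real.log_neg hη0 hη1
  have hNC' : (-Real.log η) * (q ^ d)⁻¹ ≤ (NC:ℝ) := by
    rwa [abs_of_neg hlogneg, zpow_neg, zpow_natCast] at hNC
  have hkey : -Real.log η ≤ (NC:ℝ) * q ^ d := by
    have h := mul_le_mul_of_nonneg_right hNC' hqd.le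
    rw [mul_assoc, inv_mul_cancel₀ hqd.ne', mul_one] at h
    exact h
  calc (1 - P) ^ NC ≤ (1 - q ^ d) ^ NC := by
        apply pow_le_pow_left₀ (by linarith) (by linarith)
    _ ≤ (Real.exp (-(q ^ d))) ^ NC := by
        apply pow_le_pow_left₀ (by linarith)
        have := Real.add_one_le_exp (-(q ^ d))
        linarith
    _ = Real.exp ((NC:ℝ) * (-(q ^ d))) := (Real.exp_nat_mul _ _).symm
    _ ≤ Real.exp (Real.log η) := by
        apply Real.exp_le_exp.mpr
        nlinarith
    _ = η := Real.exp_log hη0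
end
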